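/- For a positive definite symmetric matrix Σ with Σ = P D P^T where P is orthogonal and D = diag(d_1,...,d_n) with d_i > 0, and for any natural number k ≥ 1 and symmetric matrix V, the directional derivative of the k-th power map at Σ in direction V satisfies ∂_V pow_k(Σ) := Σ^{l} V Σ^{k-1-l} summed over l = 0,...,k-1, and equals P (δ ∘ (P^T V P)) P^T where δ is the matrix with entries δ(i,j) = (d_i^k - d_j^k)/(d_i - d_j) if d_i ≠ d_j and k d_i^{k-1} if d_i = d_j, and ∘ denotes the Hadamard (entrywise) product. -/
import Mathlib


open Matrix Finset

lemma geom_key (x y : ℝ) (k : ℕ) :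
    ∑ l ∈ Finset.range k, x ^ l * y ^ (k - 1 - l)
      = if x = y then (k : ℝ) * x ^ (k - 1) else (x ^ k - y ^ k) / (x - y) := by
  by_cases h : x = y
  · subst h
    rw [if_pos rfl]
    have hc : ∀ l ∈ Finset.range k, x ^ l * x ^ (k - 1 - l) = x ^ (k - 1) := by
      intro l hl
      rw [← pow_add]
      congr 1
      have := Finset.mem_range.mp hl
      omega
    rw [Finset.sum_congr rfl hc, Finset.sum_const, Finset.card_range, nsmul_eq_mul]
  · rw [if_neg h, eq_div_iff (sub_ne_zero.mpr h)]
    exact geom_sum₂_mul x y k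

/-- Differential of the `k`-th power map at an SPD matrix `S = P D Pᵀ`:
`∂_V pow_k(S) = ∑_{l=0}^{k-1} S^l V S^{k-1-l} = P (δ ∘ Pᵀ V P) Pᵀ`,
where `δ(i,j) = (d_i^k - d_j^k)/(d_i - d_j)` if `d_i ≠ d_j` and `k d_i^{k-1}` otherwise,
and `∘` denotes the Hadamard product. -/
theorem deriv_pow_spectral (n : ℕ) (S P V : Matrix (Fin n) (Fin n) ℝ)
    (d : Fin n → ℝ) (hd : ∀ i, 0 < d i) (hP : P * Pᵀ = 1)
    (hS : S = P * Matrix.diagonal d * Pᵀ) (hSpd : S.PosDef)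
    (hV : V.IsSymm) (k : ℕ) (hk : 1 ≤ k) :
    ∑ l ∈ Finset.range k, S ^ l * V * S ^ (k - 1 - l)
      = P * (Matrix.hadamard
          (Matrix.of fun i j =>
            if d i = d j then (k : ℝ) * d i ^ (k - 1)
            else (d i ^ k - d j ^ k) / (d i - d j))
          (Pᵀ * V * P)) * Pᵀ := by
  have hP' : Pᵀ * P = 1 := mul_eq_one_comm.mp hP
  have hpow : ∀ l, S ^ l = P * Matrix.diagonal (fun i => d i ^ l) * Pᵀ := by
    intro l
    induction l with
    | zero => simp [hP]
    | succ m ih =>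
      rw [pow_succ, ih, hS]
      have hfun : (fun i => d i ^ (m + 1)) = fun i => d i ^ m * d i :=
        funext fun i => pow_succ _ _
      rw [hfun, ← Matrix.diagonal_mul_diagonal]
      simp only [Matrix.mul_assoc]
      rw [← Matrix.mul_assoc Pᵀ P, hP', Matrix.one_mul]
  set M := Pᵀ * V * P with hM
  have hterm : ∀ l, S ^ l * V * S ^ (k - 1 - l)
      = P * (Matrix.diagonal (fun i => d i ^ l) * M
          * Matrix.diagonal (fun i => d i ^ (k - 1 - l))) * Pᵀ := by
    intro l
    rw [hpow l, hpow (k - 1 - l), hM]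
    simp only [Matrix.mul_assoc]
  calc ∑ l ∈ Finset.range k, S ^ l * V * S ^ (k - 1 - l)
      = P * (∑ l ∈ Finset.range k, Matrix.diagonal (fun i => d i ^ l) * M
          * Matrix.diagonal (fun i => d i ^ (k - 1 - l))) * Pᵀ := by
        rw [Finset.mul_sum, Finset.sum_mul]
        exact Finset.sum_congr rfl fun l _ => hterm l
    _ = _ := by
        congr 1
        congr 1
        ext i j
        simp only [Matrix.sum_apply, Matrix.mul_diagonal, Matrix.diagonal_mul,
          Matrix.hadamard_apply, Matrix.of_apply]
        rw [show ∑ l ∈ Finset.range k, d i ^ l * M i j * d j ^ (k - 1 - l)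
            = (∑ l ∈ Finset.range k, d i ^ l * d j ^ (k - 1 - l)) * M i j by
          rw [Finset.sum_mul]; exact Finset.sum_congr rfl fun l _ => by ring]
        rw [geom_key]
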